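/- In the network setup, the set of end-state tuples (ℓ_h⁻, ℓ_h⁺)_{h∈H} with 0 ≤ ℓ_h⁻ < ℓ_h⁺ ≤ 1 satisfying f_h(ℓ_h⁺) = f_h(ℓ_h⁻) for every h ∈ H and f_j(ℓ_j⁻) = Σ_{i∈I} α_{i,j} f_i(ℓ_i⁻) for every j ∈ J is infinite. Moreover, the stationary traveling waves of the network problem at profile level are exactly characterized by these conditions: for every such tuple, the associated profiles (all with speed c_h = 0) form a traveling wave at profile level; conversely, the end states of any stationary traveling wave at profile level satisfy these conditions. -/

import Mathlib

open Set Filter MeasureTheory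
open scoped Topology Classical

/-- Assumption (f): `f ∈ C¹([0,1];ℝ)` is nonnegative, strictly concave, `f 0 = f 1 = 0`. -/
def FluxAssumption (f : ℝ → ℝ) : Prop :=
  ContDiffOn ℝ 1 f (Icc 0 1) ∧ StrictConcaveOn ℝ (Icc 0 1) f ∧
  (∀ x ∈ Icc (0:ℝ) 1, 0 ≤ f x) ∧ f 0 = 0 ∧ f 1 = 0

/-- Assumption (D): `D ∈ C¹([0,1];ℝ)` is nonnegative and positive on `(0,1)`. -/
def DiffAssumption (D : ℝ → ℝ) : Prop :=
  ContDiffOn ℝ 1 D (Icc 0 1) ∧ (∀ x ∈ Icc (0:ℝ) 1, 0 ≤ D x) ∧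
  (∀ x ∈ Ioo (0:ℝ) 1, 0 < D x)

/-- The wave speed `c = (f(ℓ⁺) - f(ℓ⁻))/(ℓ⁺ - ℓ⁻)`. -/
noncomputable def waveSpeed (f : ℝ → ℝ) (a b : ℝ) : ℝ := (f b - f a) / (b - a)

/-- The reduced flux `g(ρ) = f(ρ) - c ρ`. -/
noncomputable def redFlux (f : ℝ → ℝ) (a b ρ : ℝ) : ℝ := f ρ - waveSpeed f a b * ρ

/-- A profile for data `f, D, ℓ⁻ = a, ℓ⁺ = b`: continuous, non-decreasing, with values in
`[a,b]`, limits `a` at `-∞` and `b` at `+∞`, `C²` on `I = {ξ | a < φ ξ < b}` with positive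
derivative there, satisfying `D(φ) φ' = g(φ) - g(a)` on `I`. -/
def IsProfile (f D : ℝ → ℝ) (a b : ℝ) (φ : ℝ → ℝ) : Prop :=
  Continuous φ ∧ Monotone φ ∧ (∀ ξ, φ ξ ∈ Icc a b) ∧
  Tendsto φ atBot (𝓝 a) ∧ Tendsto φ atTop (𝓝 b) ∧
  ContDiffOn ℝ 2 φ {ξ | a < φ ξ ∧ φ ξ < b} ∧
  ∀ ξ, a < φ ξ → φ ξ < b →
    0 < deriv φ ξ ∧ D (φ ξ) * deriv φ ξ = redFlux f a b (φ ξ) - redFlux f a b a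

/-- Speed of road `h` given end–state functions. -/
noncomputable def spd {H : Type*} (f : H → ℝ → ℝ) (lm lp : H → ℝ) (h : H) : ℝ :=
  waveSpeed (f h) (lm h) (lp h)

/-- Reduced flux of road `h` given end–state functions. -/
noncomputable def gred {H : Type*} (f : H → ℝ → ℝ) (lm lp : H → ℝ) (h : H) (ρ : ℝ) : ℝ :=
  redFlux (f h) (lm h) (lp h) ρ

/-- The network setup: flux/diffusivity assumptions on each road, and coefficients
`α i j ∈ (0,1]` with unit row sums. -/
def NetworkSetup {m n : ℕ} (f D : Fin m ⊕ Fin n → ℝ → ℝ) (α : Fin m → Fin n → ℝ) : Prop :=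
  (∀ h, FluxAssumption (f h)) ∧ (∀ h, DiffAssumption (D h)) ∧
  (∀ i j, α i j ∈ Ioc (0:ℝ) 1) ∧ (∀ i, ∑ j, α i j = 1)

/-- Admissible end states: `0 ≤ ℓ_h⁻ < ℓ_h⁺ ≤ 1` for every road. -/
def EndStates {H : Type*} (lm lp : H → ℝ) : Prop :=
  ∀ h, 0 ≤ lm h ∧ lm h < lp h ∧ lp h ≤ 1

/-- The coupling condition (Tool):
`c_j φ_j(c_j t) + g_j(ℓ_j⁻) = ∑_i α_{i,j} (c_i φ_i(c_i t) + g_i(ℓ_i⁻))` for all `t, j`. -/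
def Tool {m n : ℕ} (f : Fin m ⊕ Fin n → ℝ → ℝ) (α : Fin m → Fin n → ℝ)
    (lm lp : Fin m ⊕ Fin n → ℝ) (φ : Fin m ⊕ Fin n → ℝ → ℝ) : Prop :=
  ∀ t : ℝ, ∀ j : Fin n,
    spd f lm lp (Sum.inr j) * φ (Sum.inr j) (spd f lm lp (Sum.inr j) * t)
      + gred f lm lp (Sum.inr j) (lm (Sum.inr j))
    = ∑ i : Fin m, α i j *
        (spd f lm lp (Sum.inl i) * φ (Sum.inl i) (spd f lm lp (Sum.inl i) * t)
          + gred f lm lp (Sum.inl i) (lm (Sum.inl i)))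

/-- A traveling wave of the network problem at profile level: a family of profiles
satisfying the coupling condition (Tool). -/
def IsTravelingWave {m n : ℕ} (f D : Fin m ⊕ Fin n → ℝ → ℝ) (α : Fin m → Fin n → ℝ)
    (lm lp : Fin m ⊕ Fin n → ℝ) (φ : Fin m ⊕ Fin n → ℝ → ℝ) : Prop :=
  (∀ h, IsProfile (f h) (D h) (lm h) (lp h) (φ h)) ∧ Tool f α lm lp φ

/-- `L_{i,j}⁻`: `ℓ_i⁻` if `c_i c_j ≥ 0`, and `ℓ_i⁺` otherwise. -/
noncomputable def Lminus {m n : ℕ} (f : Fin m ⊕ Fin n → ℝ → ℝ)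
    (lm lp : Fin m ⊕ Fin n → ℝ) (i : Fin m) (j : Fin n) : ℝ :=
  if 0 ≤ spd f lm lp (Sum.inl i) * spd f lm lp (Sum.inr j) then lm (Sum.inl i)
  else lp (Sum.inl i)

/-- `L_{i,j}⁺`: `ℓ_i⁺` if `c_i c_j ≥ 0`, and `ℓ_i⁻` otherwise. -/
noncomputable def Lplus {m n : ℕ} (f : Fin m ⊕ Fin n → ℝ → ℝ)
    (lm lp : Fin m ⊕ Fin n → ℝ) (i : Fin m) (j : Fin n) : ℝ :=
  if 0 ≤ spd f lm lp (Sum.inl i) * spd f lm lp (Sum.inr j) then lp (Sum.inl i)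
  else lm (Sum.inl i)

/-- `k_j = ∑_{i ∈ I₀ᶜ} A_{i,j} L_{i,j}⁻ - ℓ_j⁻` with `A_{i,j} = α_{i,j} c_i / c_j`. -/
noncomputable def kconst {m n : ℕ} (f : Fin m ⊕ Fin n → ℝ → ℝ) (α : Fin m → Fin n → ℝ)
    (lm lp : Fin m ⊕ Fin n → ℝ) (j : Fin n) : ℝ :=
  (∑ i ∈ Finset.univ.filter (fun i : Fin m => spd f lm lp (Sum.inl i) ≠ 0),
      (α i j * (spd f lm lp (Sum.inl i) / spd f lm lp (Sum.inr j))) * Lminus f lm lp i j)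
    - lm (Sum.inr j)

lemma strictConcave_gt_between {f : ℝ → ℝ} {a b : ℝ} (hf : FluxAssumption f)
    (ha : 0 ≤ a) (hab : a < b) (hb : b ≤ 1) (hfab : f b = f a) :
    ∀ x ∈ Ioo a b, f a < f x := by
  intro x hx
  have haI : a ∈ Icc (0:ℝ) 1 := ⟨ha, hab.le.trans hb⟩
  have hbI : b ∈ Icc (0:ℝ) 1 := ⟨ha.trans hab.le, hb⟩
  have hba : 0 < b - a := by linarith [hx.1, hx.2]
  have ht : 0 < (b - x) / (b - a) := div_pos (by linarith [hx.2]) hba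
  have hs : 0 < (x - a) / (b - a) := div_pos (by linarith [hx.1]) hba
  have hts : (b - x) / (b - a) + (x - a) / (b - a) = 1 := by field_simp; ring
  have hlt := hf.2.1.2 haI hbI (ne_of_lt hab) ht hs hts
  have hx' : ((b - x) / (b - a)) • a + ((x - a) / (b - a)) • b = x := by
    simp only [smul_eq_mul]; field_simp; ring
  rw [hx'] at hlt
  calc f a = ((b - x) / (b - a)) * f a + ((x - a) / (b - a)) * f b := by
        rw [hfab, ← add_mul, hts, one_mul]
    _ < f x := by simpa using hlt

lemma exists_stationary_profile {f D : ℝ → ℝ} {a b : ℝ} (hf : FluxAssumption f)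
    (hD : DiffAssumption D) (ha : 0 ≤ a) (hab : a < b) (hb : b ≤ 1) (hfab : f b = f a) :
    ∃ φ : ℝ → ℝ, IsProfile f D a b φ := by
  have hsub : Ioo a b ⊆ Ioo 0 1 := fun x hx => ⟨ha.trans_lt hx.1, hx.2.trans_le hb⟩
  have hsubI : Ioo a b ⊆ Icc 0 1 := fun x hx => ⟨(ha.trans_lt hx.1).le, (hx.2.trans_le hb).le⟩
  have hDpos : ∀ x ∈ Ioo a b, 0 < D x := fun x hx => hD.2.2 x (hsub hx)
  have hfpos := strictConcave_gt_between hf ha hab hb hfab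
  have hc : waveSpeed f a b = 0 := by unfold waveSpeed; rw [hfab]; simp
  have hred : ∀ ρ, redFlux f a b ρ = f ρ := by intro ρ; unfold redFlux; rw [hc]; ring
  set G : ℝ → ℝ := fun x => (f x - f a) / D x with hG_def
  have hGpos : ∀ x ∈ Ioo a b, 0 < G x := fun x hx =>
    div_pos (sub_pos.2 (hfpos x hx)) (hDpos x hx)
  have hGc1 : ContDiffOn ℝ 1 G (Ioo a b) :=
    ((hf.1.mono hsubI).sub contDiffOn_const).div (hD.1.mono hsubI)
      (fun x hx => (hDpos x hx).ne')
  have hGinv : ContinuousOn (fun x => (G x)⁻¹) (Ioo a b) :=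
    hGc1.continuousOn.inv₀ fun x hx => (hGpos x hx).ne'
  set c0 : ℝ := (a + b) / 2 with hc0_def
  have hc0 : c0 ∈ Ioo a b := ⟨by simp only [hc0_def]; linarith, by simp only [hc0_def]; linarith⟩
  set Ξ : ℝ → ℝ := fun x => ∫ t in c0..x, (G t)⁻¹ with hΞ_def
  have hΞd : ∀ x ∈ Ioo a b, HasDerivAt Ξ (G x)⁻¹ x := by
    intro x hx
    apply intervalIntegral.integral_hasDerivAt_right
    · exact (hGinv.mono ((ordConnected_Ioo).uIcc_subset hc0 hx)).intervalIntegrable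
    · exact ContinuousOn.stronglyMeasurableAtFilter isOpen_Ioo hGinv x hx
    · exact hGinv.continuousAt (isOpen_Ioo.mem_nhds hx)
  have hΞcont : ContinuousOn Ξ (Ioo a b) := fun x hx =>
    (hΞd x hx).continuousAt.continuousWithinAt
  have hΞmono : StrictMonoOn Ξ (Ioo a b) := by
    apply strictMonoOn_of_deriv_pos (convex_Ioo a b) hΞcont
    intro x hx
    rw [interior_Ioo] at hx
    rw [(hΞd x hx).deriv]
    exact inv_pos.2 (hGpos x hx)
  set S : Set ℝ := Ξ '' Ioo a b with hS_def
  have hS_open : IsOpen S := by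
    rw [isOpen_iff_mem_nhds]
    rintro ξ ⟨x, hx, rfl⟩
    have h1 : (a + x) / 2 ∈ Ioo a b := ⟨by linarith [hx.1], by linarith [hx.1, hx.2]⟩
    have h2 : (x + b) / 2 ∈ Ioo a b := ⟨by linarith [hx.1, hx.2], by linarith [hx.2]⟩
    have hlt1 : (a + x) / 2 < x := by linarith [hx.1]
    have hlt2 : x < (x + b) / 2 := by linarith [hx.2]
    have hsub2 : Ioo (Ξ ((a + x) / 2)) (Ξ ((x + b) / 2)) ⊆ S := by
      refine (intermediate_value_Ioo (by linarith) (hΞcont.mono ?_)).trans (image_mono ?_)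
      · exact fun y hy => ⟨lt_of_lt_of_le h1.1 hy.1, lt_of_le_of_lt hy.2 h2.2⟩
      · exact fun y hy => ⟨lt_of_lt_of_le h1.1 hy.1.le, lt_of_le_of_lt hy.2.le h2.2⟩
    exact mem_of_superset
      (Ioo_mem_nhds (hΞmono h1 hx hlt1) (hΞmono hx h2 hlt2)) hsub2
  set T : ℝ → Set ℝ := fun ξ => {a} ∪ {x | x ∈ Ioo a b ∧ Ξ x ≤ ξ} with hT_def
  have hTne : ∀ ξ, (T ξ).Nonempty := fun ξ => ⟨a, Or.inl rfl⟩
  have hTbdd : ∀ ξ, BddAbove (T ξ) := by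
    intro ξ
    refine ⟨b, ?_⟩
    rintro x (rfl | hx)
    · exact hab.le
    · exact hx.1.2.le
  set φ : ℝ → ℝ := fun ξ => sSup (T ξ) with hφ_def
  have hφmono : Monotone φ := fun ξ η h =>
    csSup_le_csSup (hTbdd η) (hTne ξ) (by
      rintro x (rfl | hx)
      · exact Or.inl rfl
      · exact Or.inr ⟨hx.1, hx.2.trans h⟩)
  have hφmem : ∀ ξ, φ ξ ∈ Icc a b := by
    intro ξ
    constructor
    · exact le_csSup (hTbdd ξ) (Or.inl rfl)
    · refine csSup_le (hTne ξ) ?_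
      rintro x (rfl | hx)
      · exact hab.le
      · exact hx.1.2.le
  have hφΞ : ∀ x ∈ Ioo a b, φ (Ξ x) = x := by
    intro x hx
    refine le_antisymm (csSup_le (hTne _) ?_) (le_csSup (hTbdd _) (Or.inr ⟨hx, le_refl _⟩))
    rintro y (rfl | hy)
    · exact hx.1.le
    · exact (hΞmono.le_iff_le hy.1 hx).mp hy.2
  have hφS : ∀ ξ ∈ S, φ ξ ∈ Ioo a b ∧ Ξ (φ ξ) = ξ := by
    rintro ξ ⟨x, hx, rfl⟩
    rw [hφΞ x hx]
    exact ⟨hx, rfl⟩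
  have hφnotS : ∀ ξ, ξ ∉ S → φ ξ = a ∨ φ ξ = b := by
    intro ξ hξ
    by_cases hex : ∃ y ∈ Ioo a b, Ξ y ≤ ξ
    · right
      obtain ⟨y₀, hy₀, hy₀le⟩ := hex
      have hall : ∀ y ∈ Ioo a b, Ξ y ≤ ξ := by
        intro y hy
        by_contra hlt
        push_neg at hlt
        have hy₀y : y₀ < y := by
          rcases lt_trichotomy y₀ y with h | h | h
          · exact h
          · exact absurd (h ▸ hy₀le) (not_le.2 hlt)
          · exact absurd ((hΞmono hy hy₀ h).le.trans hy₀le) (not_le.2 hlt)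
        have : ξ ∈ Ξ '' Ico y₀ y := by
          apply intermediate_value_Ico hy₀y.le
            (hΞcont.mono (fun z hz => ⟨hy₀.1.trans_le hz.1, lt_of_le_of_lt hz.2 hy.2⟩))
          exact ⟨hy₀le, hlt⟩
        obtain ⟨z, hz, hzξ⟩ := this
        exact hξ ⟨z, ⟨hy₀.1.trans_le hz.1, hz.2.trans hy.2⟩, hzξ⟩
      have hIoo : Ioo a b ⊆ T ξ := fun y hy => Or.inr ⟨hy, hall y hy⟩
      refine le_antisymm (hφmem ξ).2 ?_
      calc b = sSup (Ioo a b) := (csSup_Ioo hab).symm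
        _ ≤ φ ξ := csSup_le_csSup (hTbdd ξ) (nonempty_Ioo.2 hab) hIoo
    · left
      push_neg at hex
      refine le_antisymm (csSup_le (hTne _) ?_) (hφmem ξ).1
      rintro y (hy | hy)
      · exact le_of_eq hy
      · exact absurd hy.2 (not_le.2 (hex y hy.1))
  have hiff : ∀ ξ, (a < φ ξ ∧ φ ξ < b) ↔ ξ ∈ S := by
    intro ξ
    constructor
    · intro h
      by_contra hξ
      rcases hφnotS ξ hξ with h' | h'
      · exact absurd (h' ▸ h.1) (lt_irrefl a)
      · exact absurd (h' ▸ h.2) (lt_irrefl b)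
    · intro hξ
      exact ⟨(hφS ξ hξ).1.1, (hφS ξ hξ).1.2⟩
  -- continuity
  have hφcont : Continuous φ := by
    rw [continuous_iff_continuousAt]
    intro ξ
    rcases eq_or_lt_of_le (hφmem ξ).1 with hqa | hqa
    · -- φ ξ = a
      rw [continuousAt_iff_continuous_left_right]
      constructor
      · refine (continuousWithinAt_const (b := a)).congr ?_ hqa.symm
        intro y hy
        exact le_antisymm (le_of_le_of_eq (hφmono hy) hqa.symm) (hφmem y).1
      · refine continuousWithinAt_right_of_monotoneOn_of_exists_between
          (hφmono.monotoneOn univ) univ_mem ?_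
        intro v hv
        rw [← hqa] at hv
        obtain ⟨x, hx⟩ := nonempty_Ioo.2 (lt_min hv hab)
        have hxab : x ∈ Ioo a b := ⟨hx.1, hx.2.trans_le (min_le_right _ _)⟩
        exact ⟨Ξ x, mem_univ _, by
          rw [hφΞ x hxab, ← hqa]
          exact ⟨hx.1, hx.2.trans_le (min_le_left _ _)⟩⟩
    · rcases eq_or_lt_of_le (hφmem ξ).2 with hqb | hqb
      · -- φ ξ = b
        rw [continuousAt_iff_continuous_left_right]
        constructor
        · refine continuousWithinAt_left_of_monotoneOn_of_exists_between
            (hφmono.monotoneOn univ) univ_mem ?_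
          intro v hv
          rw [hqb] at hv
          obtain ⟨x, hx⟩ := nonempty_Ioo.2 (max_lt hv hab)
          have hxab : x ∈ Ioo a b := ⟨lt_of_le_of_lt (le_max_right _ _) hx.1, hx.2⟩
          exact ⟨Ξ x, mem_univ _, by
            rw [hφΞ x hxab, hqb]
            exact ⟨lt_of_le_of_lt (le_max_left _ _) hx.1, hx.2⟩⟩
        · refine (continuousWithinAt_const (b := b)).congr ?_ hqb
          intro y hy
          exact le_antisymm (hφmem y).2 (le_of_eq_of_le hqb.symm (hφmono hy))
      · -- a < φ ξ < b
        refine continuousAt_of_monotoneOn_of_image_mem_nhds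
          (hφmono.monotoneOn univ) univ_mem ?_
        rw [image_univ]
        refine mem_of_superset (isOpen_Ioo.mem_nhds ⟨hqa, hqb⟩) ?_
        intro x hx
        exact ⟨Ξ x, hφΞ x hx⟩
  -- limits
  have hbot : Tendsto φ atBot (𝓝 a) := by
    have hbdd : BddBelow (range φ) := ⟨a, by rintro y ⟨ξ, rfl⟩; exact (hφmem ξ).1⟩
    have := tendsto_atBot_ciInf hφmono hbdd
    have hinf : ⨅ ξ, φ ξ = a := by
      refine le_antisymm ?_ (le_ciInf fun ξ => (hφmem ξ).1)
      by_contra h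
      push_neg at h
      have hlec0 : ⨅ ξ, φ ξ ≤ c0 := by
        calc ⨅ ξ, φ ξ ≤ φ (Ξ c0) := ciInf_le hbdd _
          _ = c0 := hφΞ c0 hc0
      set x := (a + ⨅ ξ, φ ξ) / 2 with hx_def
      have hxab : x ∈ Ioo a b := ⟨by simp only [hx_def]; linarith,
        by simp only [hx_def]; nlinarith [hc0.2]⟩
      have : ⨅ ξ, φ ξ ≤ x := by
        calc ⨅ ξ, φ ξ ≤ φ (Ξ x) := ciInf_le hbdd _
          _ = x := hφΞ x hxab
      simp only [hx_def] at this
      linarith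
    rwa [hinf] at this
  have htop : Tendsto φ atTop (𝓝 b) := by
    have hbdd : BddAbove (range φ) := ⟨b, by rintro y ⟨ξ, rfl⟩; exact (hφmem ξ).2⟩
    have := tendsto_atTop_ciSup hφmono hbdd
    have hsup : ⨆ ξ, φ ξ = b := by
      refine le_antisymm (ciSup_le fun ξ => (hφmem ξ).2) ?_
      by_contra h
      push_neg at h
      have hgec0 : c0 ≤ ⨆ ξ, φ ξ := by
        calc c0 = φ (Ξ c0) := (hφΞ c0 hc0).symm
          _ ≤ ⨆ ξ, φ ξ := le_ciSup hbdd _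
      set x := ((⨆ ξ, φ ξ) + b) / 2 with hx_def
      have hxab : x ∈ Ioo a b := ⟨by simp only [hx_def]; nlinarith [hc0.1],
        by simp only [hx_def]; linarith⟩
      have : x ≤ ⨆ ξ, φ ξ := by
        calc x = φ (Ξ x) := (hφΞ x hxab).symm
          _ ≤ ⨆ ξ, φ ξ := le_ciSup hbdd _
      simp only [hx_def] at this
      linarith
    rwa [hsup] at this
  -- derivative on S
  have hφd : ∀ ξ ∈ S, HasDerivAt φ (G (φ ξ)) ξ := by
    intro ξ hξ
    obtain ⟨hφin, hΞφ⟩ := hφS ξ hξ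
    have h1 : HasDerivAt Ξ (G (φ ξ))⁻¹ (φ ξ) := hΞd _ hφin
    have h2 : (G (φ ξ))⁻¹ ≠ 0 := inv_ne_zero (hGpos _ hφin).ne'
    have h3 : ∀ᶠ y in 𝓝 ξ, Ξ (φ y) = y :=
      eventually_of_mem (hS_open.mem_nhds hξ) fun y hy => (hφS y hy).2
    have h4 := HasDerivAt.of_local_left_inverse hφcont.continuousAt h1 h2 h3
    rwa [inv_inv] at h4
  have hSeq : {ξ | a < φ ξ ∧ φ ξ < b} = S := Set.ext fun ξ => hiff ξ
  have hmaps : MapsTo φ S (Ioo a b) := fun ξ hξ => (hφS ξ hξ).1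
  have hdiff : DifferentiableOn ℝ φ S := fun ξ hξ =>
    (hφd ξ hξ).differentiableAt.differentiableWithinAt
  have hderiv_eq : EqOn (deriv φ) (G ∘ φ) S := fun ξ hξ => (hφd ξ hξ).deriv
  have hφC1 : ContDiffOn ℝ 1 φ S := by
    rw [show (1 : WithTop ℕ∞) = 0 + 1 by norm_num, contDiffOn_succ_iff_deriv_of_isOpen hS_open]
    refine ⟨hdiff, by simp, ?_⟩
    rw [contDiffOn_zero]
    exact ContinuousOn.congr
      ((hGc1.continuousOn).comp hφcont.continuousOn hmaps) hderiv_eq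
  have hφC2 : ContDiffOn ℝ 2 φ S := by
    rw [show (2 : WithTop ℕ∞) = 1 + 1 by norm_num, contDiffOn_succ_iff_deriv_of_isOpen hS_open]
    exact ⟨hdiff, by simp, ContDiffOn.congr (hGc1.comp hφC1 hmaps) hderiv_eq⟩
  refine ⟨φ, hφcont, hφmono, hφmem, hbot, htop, by rwa [hSeq], ?_⟩
  intro ξ h1 h2
  have hξS : ξ ∈ S := (hiff ξ).1 ⟨h1, h2⟩
  have hd : deriv φ ξ = G (φ ξ) := (hφd ξ hξS).deriv
  have hin : φ ξ ∈ Ioo a b := ⟨h1, h2⟩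
  constructor
  · rw [hd]; exact hGpos _ hin
  · rw [hd, hred, hred]
    simp only [hG_def]
    field_simp [(hDpos _ hin).ne']


lemma flux_pair_exists {f : ℝ → ℝ} (hf : FluxAssumption f) {θ v : ℝ}
    (hθ : θ ∈ Icc (0:ℝ) 1) (hv0 : 0 < v) (hvM : v < f θ) :
    ∃ x y : ℝ, 0 ≤ x ∧ x < y ∧ y ≤ 1 ∧ f x = v ∧ f y = v := by
  have hcont : ContinuousOn f (Icc 0 1) := hf.1.continuousOn
  have hθ0 : 0 < θ := by
    rcases eq_or_lt_of_le hθ.1 with h | h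
    · exfalso; rw [← h, hf.2.2.2.1] at hvM; linarith
    · exact h
  have hθ1 : θ < 1 := by
    rcases eq_or_lt_of_le hθ.2 with h | h
    · exfalso; rw [h, hf.2.2.2.2] at hvM; linarith
    · exact h
  have hL : v ∈ Ioo (f 0) (f θ) := by rw [hf.2.2.2.1]; exact ⟨hv0, hvM⟩
  obtain ⟨x, hx, hfx⟩ := intermediate_value_Ioo hθ0.le
    (hcont.mono (Icc_subset_Icc le_rfl hθ.2)) hL
  have hR : v ∈ Ioo (f 1) (f θ) := by rw [hf.2.2.2.2]; exact ⟨hv0, hvM⟩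
  obtain ⟨y, hy, hfy⟩ := intermediate_value_Ioo' hθ1.le
    (hcont.mono (Icc_subset_Icc hθ.1 le_rfl)) hR
  exact ⟨x, y, hx.1.le, hx.2.trans hy.1, hy.2.le, hfx, hfy⟩

/-- The network problem admits infinitely many stationary traveling waves, characterized by
`f_h(ℓ_h⁺) = f_h(ℓ_h⁻)` for all `h` and `f_j(ℓ_j⁻) = ∑_i α_{i,j} f_i(ℓ_i⁻)` for all `j`. -/
theorem stmt11 (m n : ℕ) (hm : 0 < m) (hn : 0 < n)
    (f D : Fin m ⊕ Fin n → ℝ → ℝ) (α : Fin m → Fin n → ℝ)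
    (hnet : NetworkSetup f D α)
    (Cond : (Fin m ⊕ Fin n → ℝ) → (Fin m ⊕ Fin n → ℝ) → Prop)
    (hCond : ∀ lm lp, Cond lm lp ↔
      (EndStates lm lp ∧ (∀ h, f h (lp h) = f h (lm h)) ∧
       ∀ j : Fin n, f (Sum.inr j) (lm (Sum.inr j))
          = ∑ i : Fin m, α i j * f (Sum.inl i) (lm (Sum.inl i)))) :
    {p : (Fin m ⊕ Fin n → ℝ) × (Fin m ⊕ Fin n → ℝ) | Cond p.1 p.2}.Infinite ∧
    (∀ lm lp, Cond lm lp →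
      ∃ φ : Fin m ⊕ Fin n → ℝ → ℝ,
        IsTravelingWave f D α lm lp φ ∧ ∀ h, spd f lm lp h = 0) ∧
    (∀ lm lp (φ : Fin m ⊕ Fin n → ℝ → ℝ), EndStates lm lp →
      IsTravelingWave f D α lm lp φ → (∀ h, spd f lm lp h = 0) → Cond lm lp) := by
  obtain ⟨hfa, hDa, hα, hrow⟩ := hnet
  haveI : Nonempty (Fin m) := ⟨⟨0, hm⟩⟩
  haveI : Nonempty (Fin m ⊕ Fin n) := ⟨Sum.inl ⟨0, hm⟩⟩
  refine ⟨?_, ?_, ?_⟩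
  · -- infinitude
    have hex : ∀ h : Fin m ⊕ Fin n, ∃ θ ∈ Icc (0:ℝ) 1, ∀ x ∈ Icc (0:ℝ) 1, f h x ≤ f h θ := by
      intro h
      obtain ⟨θ, hθ, hmax⟩ := isCompact_Icc.exists_isMaxOn (nonempty_Icc.2 zero_le_one)
        (hfa h).1.continuousOn
      exact ⟨θ, hθ, fun x hx => hmax hx⟩
    choose θ hθmem hθmax using hex
    have hhalf : ∀ h, 0 < f h (1/2) := by
      intro h
      have := strictConcave_gt_between (hfa h) le_rfl one_pos le_rfl
        (by rw [(hfa h).2.2.2.2, (hfa h).2.2.2.1]) (1/2) (by norm_num)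
      rwa [(hfa h).2.2.2.1] at this
    have hM : ∀ h, 0 < f h (θ h) := fun h =>
      lt_of_lt_of_le (hhalf h) (hθmax h (1/2) (by norm_num))
    set w : Fin m ⊕ Fin n → ℝ := Sum.elim (fun _ => 1) (fun j => ∑ i, α i j) with hw_def
    have hw : ∀ h, 0 < w h := by
      rintro (i | j)
      · norm_num [hw_def]
      · exact Finset.sum_pos (fun i _ => (hα i j).1) Finset.univ_nonempty
    set ε : ℝ := Finset.univ.inf' Finset.univ_nonempty (fun h => f h (θ h) / w h) with hε_def
    have hε : 0 < ε := by
      rw [hε_def, Finset.lt_inf'_iff]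
      exact fun h _ => div_pos (hM h) (hw h)
    have key : ∀ c ∈ Ioo (0:ℝ) ε, ∃ lm lp : Fin m ⊕ Fin n → ℝ,
        Cond lm lp ∧ ∀ i : Fin m, f (Sum.inl i) (lm (Sum.inl i)) = c := by
      intro c hc
      have hvc : ∀ h, 0 < c * w h ∧ c * w h < f h (θ h) := by
        intro h
        refine ⟨mul_pos hc.1 (hw h), ?_⟩
        have h1 : ε ≤ f h (θ h) / w h := Finset.inf'_le _ (Finset.mem_univ h)
        exact (lt_div_iff₀ (hw h)).1 (lt_of_lt_of_le hc.2 h1)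
      have hpair : ∀ h, ∃ xy : ℝ × ℝ, 0 ≤ xy.1 ∧ xy.1 < xy.2 ∧ xy.2 ≤ 1 ∧
          f h xy.1 = c * w h ∧ f h xy.2 = c * w h := by
        intro h
        obtain ⟨x, y, p1, p2, p3, p4, p5⟩ := flux_pair_exists (hfa h) (hθmem h)
          (hvc h).1 (hvc h).2
        exact ⟨(x, y), p1, p2, p3, p4, p5⟩
      choose xy p1 p2 p3 p4 p5 using hpair
      refine ⟨fun h => (xy h).1, fun h => (xy h).2, ?_, ?_⟩
      · rw [hCond]
        refine ⟨fun h => ⟨p1 h, p2 h, p3 h⟩, fun h => by rw [p4 h, p5 h], ?_⟩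
        intro j
        rw [p4 (Sum.inr j)]
        have hfi : ∀ i : Fin m, f (Sum.inl i) ((xy (Sum.inl i)).1) = c := by
          intro i; rw [p4 (Sum.inl i)]; simp [hw_def]
        simp only [hfi]
        simp only [hw_def, Sum.elim_inr]
        rw [Finset.mul_sum]
        exact Finset.sum_congr rfl (fun i _ => mul_comm c (α i j))
      · intro i; rw [p4 (Sum.inl i)]; simp [hw_def]
    choose lmf lpf hc1 hc2 using key
    haveI : Infinite (Ioo (0:ℝ) ε) := Ioo.infinite hε
    apply Set.infinite_of_injective_forall_mem
      (f := fun c : Ioo (0:ℝ) ε => (lmf c.1 c.2, lpf c.1 c.2))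
    · intro c c' hcc
      have h1 : lmf c.1 c.2 = lmf c'.1 c'.2 := congrArg Prod.fst hcc
      apply Subtype.ext
      calc c.1 = f (Sum.inl ⟨0, hm⟩) (lmf c.1 c.2 (Sum.inl ⟨0, hm⟩)) :=
            (hc2 c.1 c.2 ⟨0, hm⟩).symm
        _ = f (Sum.inl ⟨0, hm⟩) (lmf c'.1 c'.2 (Sum.inl ⟨0, hm⟩)) := by rw [h1]
        _ = c'.1 := hc2 c'.1 c'.2 ⟨0, hm⟩
    · intro c
      exact hc1 c.1 c.2
  · -- construction of stationary traveling waves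
    intro lm lp hcond
    rw [hCond] at hcond
    obtain ⟨hES, heq, hcoup⟩ := hcond
    have hspd : ∀ h, spd f lm lp h = 0 := by
      intro h; unfold spd waveSpeed; rw [heq h, sub_self, zero_div]
    have hgred : ∀ h ρ, gred f lm lp h ρ = f h ρ := by
      intro h ρ
      unfold gred redFlux
      rw [show waveSpeed (f h) (lm h) (lp h) = spd f lm lp h from rfl, hspd h]
      ring
    have hprof : ∀ h, ∃ φ, IsProfile (f h) (D h) (lm h) (lp h) φ := fun h =>
      exists_stationary_profile (hfa h) (hDa h) (hES h).1 (hES h).2.1 (hES h).2.2 (heq h)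
    choose φ hφ using hprof
    refine ⟨φ, ⟨hφ, ?_⟩, hspd⟩
    intro t j
    simp only [hspd, zero_mul, zero_add, hgred]
    exact hcoup j
  · -- converse
    intro lm lp φ hES hTW hspd
    rw [hCond]
    have heq : ∀ h, f h (lp h) = f h (lm h) := by
      intro h
      have h0 := hspd h
      unfold spd waveSpeed at h0
      have hne : lp h - lm h ≠ 0 := sub_ne_zero.2 (ne_of_gt (hES h).2.1)
      rcases div_eq_zero_iff.1 h0 with h' | h'
      · exact sub_eq_zero.1 h'
      · exact absurd h' hne
    refine ⟨hES, heq, ?_⟩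
    intro j
    have hT := hTW.2 0 j
    have hgred : ∀ h, gred f lm lp h (lm h) = f h (lm h) := by
      intro h
      unfold gred redFlux
      rw [show waveSpeed (f h) (lm h) (lp h) = spd f lm lp h from rfl, hspd h]
      ring
    simpa only [hspd, zero_mul, zero_add, hgred] using hT
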